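/- arXiv:0912.4978 — 8 statements merged into one kernel-verified Lean document; each statement's English description precedes it below -/
import Mathlib

section
/- Let D₁ and D₂ be tournaments with involution and let f : U → W be a homomorphism from the subdigraph of D₁ induced by U to the subdigraph of D₂ induced by W, with W = f(U). Suppose there is a vertex u ∈ U with u' ∈ U and f(u) = f(u'). Then f(U) ⊆ {v, v'}, where v = f(u). -/
/-- For a homomorphism `f` between induced subdigraphs of tournaments with
involution, if `u, u' ∈ U` and `f u = f u'`, then `f(U) ⊆ {v, v'}` where `v = f u`. -/
theorem stmt_4 {V₁ V₂ : Type*} (E₁ : V₁ → V₁ → Prop) (inv₁ : V₁ → V₁)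
    (E₂ : V₂ → V₂ → Prop) (inv₂ : V₂ → V₂)
    -- D₁ is a tournament with involution
    (h₁refl : ∀ x, E₁ x x)
    (h₁auto : ∀ x y, E₁ x y ↔ E₁ (inv₁ x) (inv₁ y))
    (h₁DI1 : ∀ x, inv₁ (inv₁ x) = x)
    (h₁DI2 : ∀ x y, E₁ x y → E₁ y (inv₁ x))
    (h₁DI3 : ∀ x y, x ≠ y → E₁ x y → E₁ y x → y = inv₁ x)
    (h₁tour : ∀ x y, E₁ x y ∨ E₁ y x)
    -- D₂ is a tournament with involution
    (h₂refl : ∀ x, E₂ x x)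
    (h₂auto : ∀ x y, E₂ x y ↔ E₂ (inv₂ x) (inv₂ y))
    (h₂DI1 : ∀ x, inv₂ (inv₂ x) = x)
    (h₂DI2 : ∀ x y, E₂ x y → E₂ y (inv₂ x))
    (h₂DI3 : ∀ x y, x ≠ y → E₂ x y → E₂ y x → y = inv₂ x)
    (h₂tour : ∀ x y, E₂ x y ∨ E₂ y x)
    -- f : D₁[U] → D₂[W] is a homomorphism, W = f(U)
    (U : Set V₁) (f : V₁ → V₂)
    (hhom : ∀ x ∈ U, ∀ y ∈ U, E₁ x y → E₂ (f x) (f y))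
    (u : V₁) (hu : u ∈ U) (hu' : inv₁ u ∈ U) (hfu : f u = f (inv₁ u)) :
    f '' U ⊆ {f u, inv₂ (f u)} := by
  rintro w ⟨x, hx, rfl⟩
  -- First: E₂ (f u) (f x) and E₂ (f x) (f u)
  have key : E₂ (f u) (f x) ∧ E₂ (f x) (f u) := by
    rcases h₁tour u x with h | h
    · refine ⟨hhom u hu x hx h, ?_⟩
      have := hhom x hx (inv₁ u) hu' (h₁DI2 u x h)
      rwa [← hfu] at this
    · refine ⟨?_, hhom x hx u hu h⟩
      rcases h₁tour (inv₁ u) x with h2 | h2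
      · have := hhom (inv₁ u) hu' x hx h2
        rwa [← hfu] at this
      · have h3 : E₁ (inv₁ u) (inv₁ x) := h₁DI2 x (inv₁ u) h2
        have h4 : E₁ u x := by
          have := (h₁auto (inv₁ u) (inv₁ x)).mp h3
          rwa [h₁DI1, h₁DI1] at this
        exact hhom u hu x hx h4
  by_cases hne : f u = f x
  · exact Or.inl hne.symm
  · exact Or.inr (h₂DI3 (f u) (f x) hne key.1 key.2)
end

section
/- Let D₁ and D₂ be tournaments with involution and let f : U → W be a homomorphism from D₁[U] to D₂[W]. If there is a vertex u ∈ U with u' ∈ U and f(u) = f(u'), then f extends to a homomorphism f* : D₁ → D₂ defined on all of V(D₁). -/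
/-- For a homomorphism `f` between induced subdigraphs of tournaments with
involution, if `u, u' ∈ U` and `f u = f u'`, then `f` extends to a homomorphism
`f* : D₁ → D₂`. -/
theorem stmt_5 {V₁ V₂ : Type*} (E₁ : V₁ → V₁ → Prop) (inv₁ : V₁ → V₁)
    (E₂ : V₂ → V₂ → Prop) (inv₂ : V₂ → V₂)
    (h₁refl : ∀ x, E₁ x x)
    (h₁auto : ∀ x y, E₁ x y ↔ E₁ (inv₁ x) (inv₁ y))
    (h₁DI1 : ∀ x, inv₁ (inv₁ x) = x)
    (h₁DI2 : ∀ x y, E₁ x y → E₁ y (inv₁ x))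
    (h₁DI3 : ∀ x y, x ≠ y → E₁ x y → E₁ y x → y = inv₁ x)
    (h₁tour : ∀ x y, E₁ x y ∨ E₁ y x)
    (h₂refl : ∀ x, E₂ x x)
    (h₂auto : ∀ x y, E₂ x y ↔ E₂ (inv₂ x) (inv₂ y))
    (h₂DI1 : ∀ x, inv₂ (inv₂ x) = x)
    (h₂DI2 : ∀ x y, E₂ x y → E₂ y (inv₂ x))
    (h₂DI3 : ∀ x y, x ≠ y → E₂ x y → E₂ y x → y = inv₂ x)
    (h₂tour : ∀ x y, E₂ x y ∨ E₂ y x)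
    (U : Set V₁) (f : V₁ → V₂)
    (hhom : ∀ x ∈ U, ∀ y ∈ U, E₁ x y → E₂ (f x) (f y))
    (u : V₁) (hu : u ∈ U) (hu' : inv₁ u ∈ U) (hfu : f u = f (inv₁ u)) :
    ∃ g : V₁ → V₂, (∀ x y, E₁ x y → E₂ (g x) (g y)) ∧ ∀ x ∈ U, g x = f x := by
  classical
  set w := f u with hw
  -- for every x ∈ U, both E₂ (f x) w and E₂ w (f x)
  have hboth : ∀ x ∈ U, E₂ (f x) w ∧ E₂ w (f x) := by
    intro x hx
    rcases h₁tour x u with h | h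
    · constructor
      · exact hhom x hx u hu h
      · -- E₁ x u → E₁ (inv₁ x) (inv₁ u) → E₁ (inv₁ u) x
        have h2 : E₁ (inv₁ x) (inv₁ u) := (h₁auto x u).mp h
        have h3 : E₁ (inv₁ u) (inv₁ (inv₁ x)) := h₁DI2 _ _ h2
        rw [h₁DI1] at h3
        have := hhom (inv₁ u) hu' x hx h3
        rwa [← hfu] at this
    · constructor
      · -- E₁ u x → E₁ x (inv₁ u)
        have h2 : E₁ x (inv₁ u) := h₁DI2 _ _ h
        have := hhom x hx (inv₁ u) hu' h2
        rwa [← hfu] at this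
      · exact hhom u hu x hx h
  refine ⟨fun x => if x ∈ U then f x else w, ?_, ?_⟩
  · intro x y hxy
    by_cases hx : x ∈ U <;> by_cases hy : y ∈ U <;> simp [hx, hy]
    · exact hhom x hx y hy hxy
    · exact (hboth x hx).1
    · exact (hboth y hy).2
    · exact h₂refl w
  · intro x hx
    simp [hx]
end

section
/- Let D₁ and D₂ be tournaments with involution and let f : U → W be a homomorphism from D₁[U] to D₂[W]. Assume that for every vertex v ∈ V(D₂), f(U) is not contained in {v, v'}. Then f(u') = f(u)' whenever both u and u' belong to U. -/
/-- For a homomorphism `f` between induced subdigraphs of tournaments with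
involution, if `f(U)` is not contained in any `{v, v'}`, then `f(u') = f(u)'` whenever
`u, u' ∈ U`. -/
theorem stmt_6 {V₁ V₂ : Type*} (E₁ : V₁ → V₁ → Prop) (inv₁ : V₁ → V₁)
    (E₂ : V₂ → V₂ → Prop) (inv₂ : V₂ → V₂)
    (h₁refl : ∀ x, E₁ x x)
    (h₁auto : ∀ x y, E₁ x y ↔ E₁ (inv₁ x) (inv₁ y))
    (h₁DI1 : ∀ x, inv₁ (inv₁ x) = x)
    (h₁DI2 : ∀ x y, E₁ x y → E₁ y (inv₁ x))
    (h₁DI3 : ∀ x y, x ≠ y → E₁ x y → E₁ y x → y = inv₁ x)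
    (h₁tour : ∀ x y, E₁ x y ∨ E₁ y x)
    (h₂refl : ∀ x, E₂ x x)
    (h₂auto : ∀ x y, E₂ x y ↔ E₂ (inv₂ x) (inv₂ y))
    (h₂DI1 : ∀ x, inv₂ (inv₂ x) = x)
    (h₂DI2 : ∀ x y, E₂ x y → E₂ y (inv₂ x))
    (h₂DI3 : ∀ x y, x ≠ y → E₂ x y → E₂ y x → y = inv₂ x)
    (h₂tour : ∀ x y, E₂ x y ∨ E₂ y x)
    (U : Set V₁) (f : V₁ → V₂)
    (hhom : ∀ x ∈ U, ∀ y ∈ U, E₁ x y → E₂ (f x) (f y))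
    (hnot : ∀ v : V₂, ¬ (f '' U ⊆ {v, inv₂ v})) :
    ∀ u ∈ U, inv₁ u ∈ U → f (inv₁ u) = inv₂ (f u) := by
  intro u hu hu'
  -- edges in both directions between u and inv₁ u
  have e1 : E₁ u (inv₁ u) := h₁DI2 u u (h₁refl u)
  have e2 : E₁ (inv₁ u) u := by
    have := h₁DI2 (inv₁ u) (inv₁ u) (h₁refl (inv₁ u))
    rwa [h₁DI1] at this
  have f1 : E₂ (f u) (f (inv₁ u)) := hhom u hu (inv₁ u) hu' e1
  have f2 : E₂ (f (inv₁ u)) (f u) := hhom (inv₁ u) hu' u hu e2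
  by_cases hne : f u = f (inv₁ u)
  · -- contradiction case: f(u') = f(u) = a
    exfalso
    set a := f u with ha
    obtain ⟨fw, ⟨w, hw, rfl⟩, hfw⟩ := Set.not_subset.mp (hnot a)
    have hfwne : f w ≠ a ∧ f w ≠ inv₂ a := by
      constructor <;> intro h <;> apply hfw <;> simp [h]
    have key : f w = inv₂ a := by
      rcases h₁tour u w with huw | hwu
      · have d1 : E₂ a (f w) := hhom u hu w hw huw
        have d2 : E₂ (f w) a := by
          have := hhom w hw (inv₁ u) hu' (h₁DI2 u w huw)
          rwa [← hne] at this
        exact h₂DI3 a (f w) (Ne.symm hfwne.1) d1 d2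
      · have d2 : E₂ (f w) a := hhom w hw u hu hwu
        have hiu : E₁ (inv₁ u) w := by
          have h3 : E₁ u (inv₁ w) := h₁DI2 w u hwu
          have := (h₁auto u (inv₁ w)).mp h3
          rwa [h₁DI1] at this
        have d1 : E₂ a (f w) := by
          have := hhom (inv₁ u) hu' w hw hiu
          rwa [← hne] at this
        exact h₂DI3 a (f w) (Ne.symm hfwne.1) d1 d2
    exact hfwne.2 key
  · exact (h₂DI3 (f u) (f (inv₁ u)) (by simpa using hne) f1 f2).symm ▸ rfl
end

section
/- Every retract of a homomorphism-homogeneous digraph is homomorphism-homogeneous. Precisely: let D be a finite digraph that is homomorphism-homogeneous, and let D* be a retract of D, i.e., there are homomorphisms r : D → D* and j : D* → D with r ∘ j = id. Then D* is homomorphism-homogeneous. -/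
/-- A digraph `(V, E)` is homomorphism-homogeneous if every homomorphism between finitely
induced subdigraphs extends to an endomorphism. -/
def IsHomHom {V : Type*} (E : V → V → Prop) : Prop :=
  ∀ (U : Set V) (f : V → V), U.Finite →
    (∀ x ∈ U, ∀ y ∈ U, E x y → E (f x) (f y)) →
    ∃ g : V → V, (∀ x y, E x y → E (g x) (g y)) ∧ ∀ x ∈ U, g x = f x

/-- Every retract of a finite homomorphism-homogeneous digraph is
homomorphism-homogeneous. -/
theorem stmt_8 {V V' : Type*} [Fintype V] [Fintype V']
    (E : V → V → Prop) (E' : V' → V' → Prop)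
    (r : V → V') (j : V' → V)
    (hr : ∀ x y, E x y → E' (r x) (r y))
    (hj : ∀ x y, E' x y → E (j x) (j y))
    (hrj : ∀ x, r (j x) = x)
    (hD : IsHomHom E) :
    IsHomHom E' := by
  intro U f hU hf
  have hside : ∀ x ∈ j '' U, ∀ y ∈ j '' U, E x y → E (j (f (r x))) (j (f (r y))) := by
    rintro x ⟨u, hu, rfl⟩ y ⟨v, hv, rfl⟩ h
    have h' := hr _ _ h
    rw [hrj, hrj] at h'
    simpa [hrj] using hj _ _ (hf u hu v hv h')
  obtain ⟨g, hg, hgU⟩ := hD (j '' U) (fun x => j (f (r x))) (hU.image j) hside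
  refine ⟨fun x => r (g (j x)), fun x y h => hr _ _ (hg _ _ (hj _ _ h)), fun u hu => ?_⟩
  show r (g (j u)) = f u
  rw [hgU (j u) ⟨u, hu, rfl⟩]
  simp [hrj]
end

section
/- A finite quasiorder (A, ≤) is homomorphism-homogeneous if and only if its quotient partial order (A/≡, ≤), where x ≡ y iff x ≤ y and y ≤ x, is homomorphism-homogeneous. (Here homomorphism-homogeneity is taken in the sense of reflexive digraphs given by the order relation.) -/
/-- A finite quasiorder is homomorphism-homogeneous iff its quotient
partial order (its antisymmetrization) is homomorphism-homogeneous. -/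
theorem stmt_9 {A : Type*} [Fintype A] [Preorder A] :
    IsHomHom (fun x y : A => x ≤ y) ↔
      IsHomHom (fun x y : Antisymmetrization A (· ≤ ·) => x ≤ y) := by
  classical
  rcases isEmpty_or_nonempty A with hA | hA
  · have : IsEmpty (Antisymmetrization A (· ≤ ·)) :=
      ⟨fun q => isEmptyElim (ofAntisymmetrization (· ≤ ·) q)⟩
    constructor <;> intro _ U f _ _ <;> exact ⟨f, fun x => isEmptyElim x, fun x _ => rfl⟩
  set π : A → Antisymmetrization A (· ≤ ·) := toAntisymmetrization (· ≤ ·) with hπ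
  set σ : Antisymmetrization A (· ≤ ·) → A := ofAntisymmetrization (· ≤ ·) with hσ
  have hπσ : ∀ q, π (σ q) = q := toAntisymmetrization_ofAntisymmetrization _
  have hπle : ∀ {a b : A}, a ≤ b ↔ π a ≤ π b := fun {a b} =>
    (toAntisymmetrization_le_toAntisymmetrization_iff).symm
  have hσle : ∀ {p q : Antisymmetrization A (· ≤ ·)}, σ p ≤ σ q ↔ p ≤ q := fun {p q} =>
    ofAntisymmetrization_le_ofAntisymmetrization_iff
  constructor
  · intro h U f hUfin hf
    refine ?_
    -- lift problem to A
    obtain ⟨g, hg, hgU⟩ := h (π ⁻¹' U) (fun a => σ (f (π a))) (Set.toFinite _)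
      (by
        intro x hx y hy hxy
        exact hσle.2 (hf (π x) hx (π y) hy (hπle.1 hxy)))
    refine ⟨fun q => π (g (σ q)), fun p q hpq => hπle.1 (hg _ _ (hσle.2 hpq)), ?_⟩
    intro q hq
    have hmem : σ q ∈ π ⁻¹' U := by simp [Set.mem_preimage, hπσ q, hq]
    have h2 := hgU (σ q) hmem
    show π (g (σ q)) = f q
    rw [h2, hπσ q, hπσ]
  · intro h U f hUfin hf
    -- push problem to quotient
    have hwell : ∀ x ∈ U, ∀ y ∈ U, π x = π y → π (f x) = π (f y) := by
      intro x hx y hy hxy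
      have h1 : x ≤ y := hπle.2 hxy.le
      have h2 : y ≤ x := hπle.2 hxy.ge
      exact le_antisymm (hπle.1 (hf x hx y hy h1)) (hπle.1 (hf y hy x hx h2))
    set s : Antisymmetrization A (· ≤ ·) → A := Function.invFunOn π U with hs
    have hsU : ∀ q ∈ π '' U, s q ∈ U ∧ π (s q) = q := by
      intro q hq
      obtain ⟨x, hx, hxq⟩ := hq
      exact ⟨Function.invFunOn_mem ⟨x, hx, hxq⟩, Function.invFunOn_eq ⟨x, hx, hxq⟩⟩
    have hcomp : ∀ x ∈ U, π (f (s (π x))) = π (f x) := by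
      intro x hx
      obtain ⟨h1, h2⟩ := hsU (π x) ⟨x, hx, rfl⟩
      exact hwell _ h1 _ hx h2
    obtain ⟨g₀, hg₀, hg₀U⟩ := h (π '' U) (fun q => π (f (s q))) (hUfin.image _)
      (by
        intro p hp q hq hpq
        obtain ⟨hp1, hp2⟩ := hsU p hp
        obtain ⟨hq1, hq2⟩ := hsU q hq
        have : s p ≤ s q := hπle.2 (by rw [hp2, hq2]; exact hpq)
        exact hπle.1 (hf _ hp1 _ hq1 this))
    have key : ∀ x ∈ U, g₀ (π x) = π (f x) := by
      intro x hx
      rw [hg₀U (π x) ⟨x, hx, rfl⟩, hcomp x hx]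
    refine ⟨fun a => if ha : a ∈ U then f a else σ (g₀ (π a)), ?_, ?_⟩
    · intro x y hxy
      by_cases hx : x ∈ U <;> by_cases hy : y ∈ U <;> simp only [dif_pos, dif_neg, hx, hy]
      · exact hf x hx y hy hxy
      · have : π (f x) ≤ g₀ (π y) := by
          rw [← key x hx]; exact hg₀ _ _ (hπle.1 hxy)
        have := hσle.2 this
        calc f x ≤ σ (π (f x)) := hπle.2 (by rw [hπσ])
          _ ≤ σ (g₀ (π y)) := this
      · have : g₀ (π x) ≤ π (f y) := by
          rw [← key y hy]; exact hg₀ _ _ (hπle.1 hxy)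
        have := hσle.2 this
        calc σ (g₀ (π x)) ≤ σ (π (f y)) := this
          _ ≤ f y := hπle.2 (by rw [hπσ])
      · exact hσle.2 (hg₀ _ _ (hπle.1 hxy))
    · intro x hx; simp [hx]
end

section
/- Let D be a finite homomorphism-homogeneous reflexive improper digraph that is bidirectionally disconnected. Then for every θ(D)-class S, the induced subdigraph D[S] is a complete reflexive graph, i.e., (x,y) is an edge for all x, y ∈ S. -/
/-- The bidirectional connectedness relation `θ(D)`: the equivalence closure of the
double-edge relation `⇄`. -/
def Theta {V : Type*} (E : V → V → Prop) : V → V → Prop :=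
  Relation.EqvGen (fun a b => E a b ∧ E b a)

/-- `E` is improper: neither symmetric nor antisymmetric. -/
def Improper {V : Type*} (E : V → V → Prop) : Prop :=
  (∃ x y, x ≠ y ∧ E x y ∧ E y x) ∧ (∃ x y, E x y ∧ ¬ E y x)

/-- `D` is bidirectionally disconnected: there is an edge between two distinct
`θ(D)`-classes. -/
def BidirDisconnected {V : Type*} (E : V → V → Prop) : Prop :=
  ∃ x y, ¬ Theta E x y ∧ E x y

/-- Endomorphisms preserve `Theta`. -/
lemma theta_map {V : Type*} (E : V → V → Prop) (g : V → V)
    (hg : ∀ x y, E x y → E (g x) (g y)) :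
    ∀ x y, Theta E x y → Theta E (g x) (g y) := by
  intro x y h
  induction h with
  | rel a b hab => exact Relation.EqvGen.rel _ _ ⟨hg _ _ hab.1, hg _ _ hab.2⟩
  | refl a => exact Relation.EqvGen.refl _
  | symm a b _ ih => exact Relation.EqvGen.symm _ _ ih
  | trans a b c _ _ ih1 ih2 => exact Relation.EqvGen.trans _ _ _ ih1 ih2

/-- Key step: if `x θ z` but one edge direction between them fails, map `{x,z}` onto
the witnessing non-θ-related pair and extend; a contradiction follows. -/
lemma theta_both {V : Type*} (E : V → V → Prop)
    (hrefl : ∀ x, E x x) (hbd : BidirDisconnected E) (hhh : IsHomHom E) :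
    ∀ x z, Theta E x z → E x z ∧ E z x := by
  obtain ⟨u, v, huv, heuv⟩ := hbd
  have key : ∀ x z : V, x ≠ z → Theta E x z → ¬ E z x → False := by
    intro x z hxz hθ hne
    classical
    set f : V → V := fun w => if w = x then u else if w = z then v else w with hf
    have hfx : f x = u := by simp [hf]
    have hfz : f z = v := by simp [hf, hxz.symm]
    have hhom : ∀ a ∈ ({x, z} : Set V), ∀ b ∈ ({x, z} : Set V), E a b → E (f a) (f b) := by
      rintro a (rfl | rfl) b (rfl | rfl) hab
      · rw [hfx]; exact hrefl u
      · rw [hfx, hfz]; exact heuv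
      · exact absurd hab hne
      · rw [hfz]; exact hrefl v
    obtain ⟨g, hg, hgU⟩ := hhh {x, z} f (Set.toFinite _) hhom
    have : Theta E (g x) (g z) := theta_map E g hg x z hθ
    rw [hgU x (by left; rfl), hgU z (by right; rfl), hfx, hfz] at this
    exact huv this
  intro x z hθ
  by_cases hxz : x = z
  · subst hxz; exact ⟨hrefl x, hrefl x⟩
  constructor
  · by_contra hne
    exact key z x (Ne.symm hxz) (Relation.EqvGen.symm _ _ hθ) hne
  · by_contra hne
    exact key x z hxz hθ hne

/-- If `D` is a finite homomorphism-homogeneous reflexive improper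
bidirectionally disconnected digraph, then every `θ(D)`-class induces a complete
reflexive graph. -/
theorem stmt_13 {V : Type*} [Fintype V] (E : V → V → Prop)
    (hrefl : ∀ x, E x x) (himp : Improper E) (hbd : BidirDisconnected E)
    (hhh : IsHomHom E) :
    ∀ x y, Theta E x y → E x y := by
  intro x y h
  exact (theta_both E hrefl hbd hhh x y h).1
end

section
/- Let D be a finite homomorphism-homogeneous reflexive improper bidirectionally disconnected digraph, and let S, T be distinct θ(D)-classes with S ⇄ T. Define γ_T(S) ⊆ S² by (x,y) ∈ γ_T(S) iff there is no t ∈ T with (x → t → y or y → t → x). Then γ_T(S) is an equivalence relation on S. -/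
lemma theta_map_s16 {V W : Type*} {E : V → V → Prop} {E' : W → W → Prop} (g : V → W)
    (hg : ∀ a b, E a b → E' (g a) (g b)) {a b : V} (h : Theta E a b) :
    Theta E' (g a) (g b) := by
  induction h with
  | rel p q hpq => exact Relation.EqvGen.rel _ _ ⟨hg _ _ hpq.1, hg _ _ hpq.2⟩
  | refl p => exact Relation.EqvGen.refl _
  | symm p q _ ih => exact Relation.EqvGen.symm _ _ ih
  | trans p q r _ _ ih1 ih2 => exact Relation.EqvGen.trans _ _ _ ih1 ih2

lemma theta_refl {V : Type*} (E : V → V → Prop) (a : V) : Theta E a a :=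
  Relation.EqvGen.refl a

lemma theta_symm {V : Type*} {E : V → V → Prop} {a b : V} (h : Theta E a b) :
    Theta E b a := Relation.EqvGen.symm _ _ h

lemma theta_trans {V : Type*} {E : V → V → Prop} {a b c : V}
    (h1 : Theta E a b) (h2 : Theta E b c) : Theta E a c :=
  Relation.EqvGen.trans _ _ _ h1 h2

lemma theta_dbl {V : Type*} {E : V → V → Prop} {a b : V} (h : Theta E a b) :
    (a ≠ b → ∃ c, c ≠ b ∧ E c b ∧ E b c) ∧ (b ≠ a → ∃ c, c ≠ a ∧ E c a ∧ E a c) := by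
  induction h with
  | rel p q hpq =>
      exact ⟨fun hne => ⟨p, hne, hpq.1, hpq.2⟩, fun hne => ⟨q, hne, hpq.2, hpq.1⟩⟩
  | refl p => exact ⟨fun h => absurd rfl h, fun h => absurd rfl h⟩
  | symm p q _ ih => exact ⟨ih.2, ih.1⟩
  | trans p q r _ _ ih1 ih2 =>
      constructor
      · intro hpr
        by_cases hqr : q = r
        · subst hqr
          exact ih1.1 (by intro h; exact hpr h)
        · exact ih2.1 hqr
      · intro hrp
        by_cases hqp : q = p
        · subst hqp
          exact ih2.2 (by intro h; exact hrp h)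
        · exact ih1.2 hqp

lemma exists_idem_iter {V : Type*} [Finite V] (f : V → V) :
    ∃ m, 0 < m ∧ ∀ v, f^[m] (f^[m] v) = f^[m] v := by
  obtain ⟨i, j, hne, hij⟩ := Finite.exists_ne_map_eq_of_infinite (fun n : ℕ => f^[n])
  -- wlog i < j
  rcases Nat.lt_or_ge i j with hlt | hge
  · -- i < j
    set d := j - i with hd
    have hdpos : 0 < d := by omega
    have h1 : ∀ k, i ≤ k → f^[k + d] = f^[k] := by
      intro k hk
      have hkd : k + d = (k - i) + j := by omega
      have hki : k = (k - i) + i := by omega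
      rw [hkd, Function.iterate_add, ← hij, ← Function.iterate_add, ← hki]
    have h2 : ∀ c k, i ≤ k → f^[k + c * d] = f^[k] := by
      intro c
      induction c with
      | zero => intro k _; simp
      | succ c ih =>
          intro k hk
          have : k + (c + 1) * d = (k + c * d) + d := by ring
          rw [this, h1 _ (by omega), ih _ hk]
    refine ⟨d * (i + 1), by positivity, fun v => ?_⟩
    have hmi : i ≤ d * (i + 1) := by nlinarith
    have := h2 (i + 1) (d * (i + 1)) hmi
    have heq : f^[d * (i + 1) + (i + 1) * d] = f^[d * (i + 1)] := this
    have : f^[d * (i + 1) + (i + 1) * d] v = f^[d * (i + 1)] v := by rw [heq]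
    rw [Nat.add_comm, Function.iterate_add_apply] at this
    rw [Nat.mul_comm (i + 1) d] at this
    exact this
  · -- j < i
    have hlt : j < i := by omega
    set d := i - j with hd
    have hdpos : 0 < d := by omega
    have h1 : ∀ k, j ≤ k → f^[k + d] = f^[k] := by
      intro k hk
      have hkd : k + d = (k - j) + i := by omega
      have hki : k = (k - j) + j := by omega
      rw [hkd, Function.iterate_add, hij, ← Function.iterate_add, ← hki]
    have h2 : ∀ c k, j ≤ k → f^[k + c * d] = f^[k] := by
      intro c
      induction c with
      | zero => intro k _; simp
      | succ c ih =>
          intro k hk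
          have : k + (c + 1) * d = (k + c * d) + d := by ring
          rw [this, h1 _ (by omega), ih _ hk]
    refine ⟨d * (j + 1), by positivity, fun v => ?_⟩
    have hmi : j ≤ d * (j + 1) := by nlinarith
    have := h2 (j + 1) (d * (j + 1)) hmi
    have heq : f^[d * (j + 1) + (j + 1) * d] = f^[d * (j + 1)] := this
    have : f^[d * (j + 1) + (j + 1) * d] v = f^[d * (j + 1)] v := by rw [heq]
    rw [Nat.add_comm, Function.iterate_add_apply] at this
    rw [Nat.mul_comm (j + 1) d] at this
    exact this


universe u

theorem key_lemma : ∀ (n : ℕ) (V : Type u) [Fintype V] (E : V → V → Prop),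
    Fintype.card V ≤ n → (∀ a, E a a) → IsHomHom E →
    ∀ y t x z : V, ¬ Theta E y t → Theta E x y → Theta E z y → E x t → E t z →
    E y t ∨ E t y := by
  intro n
  induction n with
  | zero =>
      intro V _ E hcard _ _ y t x z _ _ _ _ _
      exact ((Fintype.card_eq_zero_iff.mp (Nat.le_zero.mp hcard)).elim y)
  | succ n IH =>
      intro V instV E hcard hrefl hhh y t x z hθ θxy θzy hxt htz
      haveI := Classical.decEq V
      by_contra hcon
      push_neg at hcon
      obtain ⟨h1, h2⟩ := hcon
      have iter_endo : ∀ (h : V → V), (∀ a b, E a b → E (h a) (h b)) →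
          ∀ m, ∀ a b, E a b → E (h^[m] a) (h^[m] b) := by
        intro h hh m
        induction m with
        | zero => intro a b hab; simpa using hab
        | succ m ih =>
            intro a b hab
            rw [Function.iterate_succ_apply', Function.iterate_succ_apply']
            exact hh _ _ (ih a b hab)
      -- F1 : a non-injective endomorphism fixing y and t yields a contradiction
      have F1 : ∀ h : V → V, (∀ a b, E a b → E (h a) (h b)) → h y = y → h t = t →
          ¬ Function.Injective h → False := by
        intro h hh hy ht hinj
        obtain ⟨m, hm, hidem⟩ := exists_idem_iter h
        have hr : ∀ a b, E a b → E (h^[m] a) (h^[m] b) := iter_endo h hh m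
        have hry : h^[m] y = y := Function.iterate_fixed hy m
        have hrt : h^[m] t = t := Function.iterate_fixed ht m
        have hrinj : ¬ Function.Injective (h^[m]) := by
          intro hi
          apply hinj
          obtain ⟨k, rfl⟩ : ∃ k, m = k + 1 := ⟨m - 1, by omega⟩
          rw [Function.iterate_succ] at hi
          exact Function.Injective.of_comp hi
        rw [Function.not_injective_iff] at hrinj
        obtain ⟨a, b, hab, hne⟩ := hrinj
        have hbad : ∃ v, h^[m] v ≠ v := by
          by_cases ha : h^[m] a = a
          · refine ⟨b, fun hb => hne ?_⟩
            calc a = h^[m] a := ha.symm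
              _ = h^[m] b := hab
              _ = b := hb
          · exact ⟨a, ha⟩
        obtain ⟨bad, hbadv⟩ := hbad
        let W := {v : V // h^[m] v = v}
        haveI : Fintype W := Fintype.ofFinite W
        have hcardW : Fintype.card W < Fintype.card V := by
          apply Fintype.card_lt_of_injective_of_notMem (fun w : W => (w : V))
            Subtype.val_injective (b := bad)
          rintro ⟨⟨v, hv⟩, rfl⟩
          exact hbadv hv
        let E' : W → W → Prop := fun a b => E a.val b.val
        have hrefl' : ∀ a : W, E' a a := fun a => hrefl a.val
        have hhh' : IsHomHom E' := by
          intro U' f' hfin' hhom'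
          have homcheck : ∀ p ∈ Subtype.val '' U', ∀ q ∈ Subtype.val '' U', E p q →
              E ((fun v : V => if hv : h^[m] v = v then ((f' ⟨v, hv⟩ : W) : V) else v) p)
                ((fun v : V => if hv : h^[m] v = v then ((f' ⟨v, hv⟩ : W) : V) else v) q) := by
            rintro p ⟨p', hp', rfl⟩ q ⟨q', hq', rfl⟩ hpq
            simp only [dif_pos p'.prop, dif_pos q'.prop]
            exact hhom' p' hp' q' hq' hpq
          obtain ⟨G, hG, hGU⟩ := hhh (Subtype.val '' U')
            (fun v : V => if hv : h^[m] v = v then ((f' ⟨v, hv⟩ : W) : V) else v)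
            (hfin'.image _) homcheck
          refine ⟨fun w => ⟨h^[m] (G w.val), hidem (G w.val)⟩, ?_, ?_⟩
          · intro a b hab
            exact hr _ _ (hG _ _ hab)
          · intro w hw
            have hGw : G w.val = (f' w : V) := by
              rw [hGU w.val ⟨w, hw, rfl⟩]
              simp only [dif_pos w.prop]
              rfl
            apply Subtype.ext
            simp only [hGw]
            exact (f' w).prop
        have hmapr : ∀ {a b : V}, Theta E a b →
            Theta E' ⟨h^[m] a, hidem a⟩ ⟨h^[m] b, hidem b⟩ := by
          intro a b hab
          exact theta_map_s16 (fun v : V => (⟨h^[m] v, hidem v⟩ : W)) (fun a b h' => hr a b h') hab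
        have hdown : ∀ {a b : W}, Theta E' a b → Theta E a.val b.val := by
          intro a b hab
          exact theta_map_s16 (fun w : W => w.val) (fun a b h' => h') hab
        have hWy : (⟨h^[m] y, hidem y⟩ : W) = ⟨y, hry⟩ := Subtype.ext hry
        have θ'xy : Theta E' ⟨h^[m] x, hidem x⟩ ⟨y, hry⟩ := by
          have h' := hmapr θxy
          rwa [hWy] at h'
        have θ'zy : Theta E' ⟨h^[m] z, hidem z⟩ ⟨y, hry⟩ := by
          have h' := hmapr θzy
          rwa [hWy] at h'
        have hθ' : ¬ Theta E' ⟨y, hry⟩ ⟨t, hrt⟩ := fun h' => hθ (hdown h')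
        have hE'xt : E' ⟨h^[m] x, hidem x⟩ ⟨t, hrt⟩ := by
          have h' := hr x t hxt
          show E (h^[m] x) t
          rwa [hrt] at h'
        have hE'tz : E' ⟨t, hrt⟩ ⟨h^[m] z, hidem z⟩ := by
          have h' := hr t z htz
          show E t (h^[m] z)
          rwa [hrt] at h'
        have hcard' : Fintype.card W ≤ n := by omega
        rcases IH W E' hcard' hrefl' hhh' ⟨y, hry⟩ ⟨t, hrt⟩ ⟨h^[m] x, hidem x⟩
          ⟨h^[m] z, hidem z⟩ hθ' θ'xy θ'zy hE'xt hE'tz with h' | h'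
        · exact h1 h'
        · exact h2 h'
      -- F2 : collapse principle
      have F2 : ∀ v w0 : V, v ≠ y → v ≠ t → v ≠ w0 →
          (E v y → E w0 y) → (E y v → E y w0) → (E v t → E w0 t) → (E t v → E t w0) →
          False := by
        intro v w0 hvy hvt hvw c1 c2 c3 c4
        have hUfin : ({y, t, v, w0} : Set V).Finite := by
          apply Set.Finite.insert; apply Set.Finite.insert; apply Set.Finite.insert
          exact Set.finite_singleton _
        have hom : ∀ a ∈ ({y, t, v, w0} : Set V), ∀ b ∈ ({y, t, v, w0} : Set V), E a b →
            E (if a = v then w0 else a) (if b = v then w0 else b) := by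
          intro a ha b hb hab
          by_cases hav : a = v
          · by_cases hbv : b = v
            · rw [if_pos hav, if_pos hbv]; exact hrefl w0
            · rw [if_pos hav, if_neg hbv]
              rw [hav] at hab
              simp only [Set.mem_insert_iff, Set.mem_singleton_iff] at hb
              rcases hb with rfl | rfl | rfl | rfl
              · exact c1 hab
              · exact c3 hab
              · exact absurd rfl hbv
              · exact hrefl _
          · rw [if_neg hav]
            by_cases hbv : b = v
            · rw [if_pos hbv]
              rw [hbv] at hab
              simp only [Set.mem_insert_iff, Set.mem_singleton_iff] at ha
              rcases ha with rfl | rfl | rfl | rfl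
              · exact c2 hab
              · exact c4 hab
              · exact absurd rfl hav
              · exact hrefl _
            · rw [if_neg hbv]; exact hab
        obtain ⟨g, hg, hgU⟩ := hhh ({y, t, v, w0} : Set V)
          (fun a => if a = v then w0 else a) hUfin hom
        have hgy : g y = y := by
          have h' := hgU y (by simp)
          simp only [if_neg (Ne.symm hvy)] at h'
          exact h'
        have hgt : g t = t := by
          have h' := hgU t (by simp)
          simp only [if_neg (Ne.symm hvt)] at h'
          exact h'
        have hgv : g v = w0 := by
          have h' := hgU v (by simp)
          simp only [if_pos rfl] at h'
          exact h'
        have hgw : g w0 = w0 := by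
          have h' := hgU w0 (by simp)
          simp only [ite_self] at h'
          exact h'
        exact F1 g hg hgy hgt (fun hi => hvw (hi (hgv.trans hgw.symm)))
      -- comparability with y and with t
      have compY : ∀ v, v ≠ y → v ≠ t → (E v y ∨ E y v) := by
        intro v hvy hvt
        by_contra hc
        push_neg at hc
        exact F2 v t hvy hvt hvt (fun h => absurd h hc.1) (fun h => absurd h hc.2)
          (fun _ => hrefl t) (fun _ => hrefl t)
      have compT : ∀ v, v ≠ y → v ≠ t → (E v t ∨ E t v) := by
        intro v hvy hvt
        by_contra hc
        push_neg at hc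
        exact F2 v y hvy hvt hvy (fun _ => hrefl y) (fun _ => hrefl y)
          (fun h => absurd h hc.1) (fun h => absurd h hc.2)
      -- F0 : no double edge between the two classes
      have F0 : ∀ a b : V, Theta E a y → Theta E b t → E a b → E b a → False := by
        intro a b hay hbt hab hba
        exact hθ (theta_trans (theta_trans (theta_symm hay)
          (Relation.EqvGen.rel a b ⟨hab, hba⟩)) hbt)
      have hyt_ne : y ≠ t := by
        intro h
        exact hθ (h ▸ theta_refl E y)
      have ntx : ¬ E t x := fun h => F0 x t θxy (theta_refl E t) hxt h
      have nzt : ¬ E z t := fun h => F0 z t θzy (theta_refl E t) h htz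
      have hx_y : x ≠ y := by
        intro h; apply h1; rw [← h]; exact hxt
      have hx_t : x ≠ t := by
        intro h; apply hθ; apply theta_symm; rw [← h]; exact θxy
      have hz_y : z ≠ y := by
        intro h; apply h2; rw [← h]; exact htz
      have hz_t : z ≠ t := by
        intro h; apply hθ; apply theta_symm; rw [← h]; exact θzy
      -- the swap endomorphism
      have hfin2 : ({y, t} : Set V).Finite := (Set.finite_singleton t).insert y
      have swap_hom : ∀ a ∈ ({y, t} : Set V), ∀ b ∈ ({y, t} : Set V), E a b →
          E (if a = y then t else if a = t then y else a)
            (if b = y then t else if b = t then y else b) := by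
        intro a ha b hb hab
        simp only [Set.mem_insert_iff, Set.mem_singleton_iff] at ha hb
        rcases ha with rfl | rfl <;> rcases hb with rfl | rfl
        · simp only [if_pos rfl]; exact hrefl _
        · exact absurd hab h1
        · exact absurd hab h2
        · simp only [if_neg (Ne.symm hyt_ne), if_pos rfl]; exact hrefl _
      obtain ⟨g, hg, hgU⟩ := hhh ({y, t} : Set V)
        (fun a => if a = y then t else if a = t then y else a) hfin2 swap_hom
      have gsy : g y = t := by
        have h' := hgU y (by simp)
        simp only [if_pos rfl] at h'
        exact h'
      have gst : g t = y := by
        have h' := hgU t (by simp)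
        simp only [if_neg (Ne.symm hyt_ne), if_pos rfl] at h'
        exact h'
      obtain ⟨u, hu_def⟩ : ∃ u, g x = u := ⟨g x, rfl⟩
      obtain ⟨w, hw_def⟩ : ∃ w, g z = w := ⟨g z, rfl⟩
      have huy : E u y := by
        have h' := hg x t hxt
        rwa [gst, hu_def] at h'
      have hyw : E y w := by
        have h' := hg t z htz
        rwa [gst, hw_def] at h'
      have θut : Theta E u t := by
        have h' := theta_map_s16 g (fun a b hab => hg a b hab) θxy
        rwa [gsy, hu_def] at h'
      have θwt : Theta E w t := by
        have h' := theta_map_s16 g (fun a b hab => hg a b hab) θzy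
        rwa [gsy, hw_def] at h'
      have nyu : ¬ E y u := fun h => F0 y u (theta_refl E y) θut h huy
      have nwy : ¬ E w y := fun h => F0 y w (theta_refl E y) θwt hyw h
      have hu_y : u ≠ y := by
        intro h; apply hθ; rw [← h]; exact θut
      have hu_t : u ≠ t := by
        intro h; apply h2; rw [← h]; exact huy
      have hw_y : w ≠ y := by
        intro h; apply hθ; rw [← h]; exact θwt
      have hw_t : w ≠ t := by
        intro h; apply h1; rw [← h]; exact hyw
      have hxu : x ≠ u := by
        intro h
        apply hθ
        exact theta_trans (theta_symm θxy) (by rw [h]; exact θut)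
      have hxw : x ≠ w := by
        intro h
        apply hθ
        exact theta_trans (theta_symm θxy) (by rw [h]; exact θwt)
      have hzu : z ≠ u := by
        intro h
        apply hθ
        exact theta_trans (theta_symm θzy) (by rw [h]; exact θut)
      have hzw : z ≠ w := by
        intro h
        apply hθ
        exact theta_trans (theta_symm θzy) (by rw [h]; exact θwt)
      -- double-edge partner of y
      obtain ⟨c, hc_y, hcy, hyc⟩ := (theta_dbl θxy).1 hx_y
      have hc_t : c ≠ t := by
        intro h; apply h1; rw [← h]; exact hyc
      have branch : (E x y ∧ E y x) ∨ (E z y ∧ E y z) := by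
        rcases compT c hc_y hc_t with hct | htc
        · left
          by_cases hxc : x = c
          · subst hxc; exact ⟨hcy, hyc⟩
          · exact (F2 x c hx_y hx_t hxc (fun _ => hcy) (fun _ => hyc) (fun _ => hct)
              (fun h => absurd h ntx)).elim
        · right
          by_cases hzc : z = c
          · subst hzc; exact ⟨hcy, hyc⟩
          · exact (F2 z c hz_y hz_t hzc (fun _ => hcy) (fun _ => hyc)
              (fun h => absurd h nzt) (fun _ => htc)).elim
      obtain ⟨exy, eyx, ezy, eyz, eut, etu, ewt, etw⟩ :
          E x y ∧ E y x ∧ E z y ∧ E y z ∧ E u t ∧ E t u ∧ E w t ∧ E t w := by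
        rcases branch with ⟨exy, eyx⟩ | ⟨ezy, eyz⟩
        · have etu : E t u := by
            by_contra hetu
            exact F2 u x hu_y hu_t (Ne.symm hxu) (fun _ => exy) (fun h => absurd h nyu)
              (fun _ => hxt) (fun h => absurd h hetu)
          have etw : E t w := by
            by_contra hetw
            exact F2 w x hw_y hw_t (Ne.symm hxw) (fun h => absurd h nwy) (fun _ => eyx)
              (fun _ => hxt) (fun h => absurd h hetw)
          have ezy : E z y := by
            by_contra hezy
            exact F2 z w hz_y hz_t hzw (fun h => absurd h hezy) (fun _ => hyw)
              (fun h => absurd h nzt) (fun _ => etw)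
          have eyz : E y z := by
            by_contra heyz
            exact F2 z u hz_y hz_t hzu (fun _ => huy) (fun h => absurd h heyz)
              (fun h => absurd h nzt) (fun _ => etu)
          have eut : E u t := by
            by_contra heut
            exact F2 u z hu_y hu_t (Ne.symm hzu) (fun _ => ezy) (fun h => absurd h nyu)
              (fun h => absurd h heut) (fun _ => htz)
          have ewt : E w t := by
            by_contra hewt
            exact F2 w z hw_y hw_t (Ne.symm hzw) (fun h => absurd h nwy) (fun _ => eyz)
              (fun h => absurd h hewt) (fun _ => htz)
          exact ⟨exy, eyx, ezy, eyz, eut, etu, ewt, etw⟩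
        · have eut : E u t := by
            by_contra heut
            exact F2 u z hu_y hu_t (Ne.symm hzu) (fun _ => ezy) (fun h => absurd h nyu)
              (fun h => absurd h heut) (fun _ => htz)
          have ewt : E w t := by
            by_contra hewt
            exact F2 w z hw_y hw_t (Ne.symm hzw) (fun h => absurd h nwy) (fun _ => eyz)
              (fun h => absurd h hewt) (fun _ => htz)
          have eyx : E y x := by
            by_contra heyx
            exact F2 x u hx_y hx_t hxu (fun _ => huy) (fun h => absurd h heyx)
              (fun _ => eut) (fun h => absurd h ntx)
          have exy : E x y := by
            by_contra hexy
            exact F2 x w hx_y hx_t hxw (fun h => absurd h hexy) (fun _ => hyw)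
              (fun _ => ewt) (fun h => absurd h ntx)
          have etu : E t u := by
            by_contra hetu
            exact F2 u x hu_y hu_t (Ne.symm hxu) (fun _ => exy) (fun h => absurd h nyu)
              (fun _ => hxt) (fun h => absurd h hetu)
          have etw : E t w := by
            by_contra hetw
            exact F2 w x hw_y hw_t (Ne.symm hxw) (fun h => absurd h nwy) (fun _ => eyx)
              (fun _ => hxt) (fun h => absurd h hetw)
          exact ⟨exy, eyx, ezy, eyz, eut, etu, ewt, etw⟩
      -- the six-element structure
      have six : ∀ v : V, v = y ∨ v = t ∨ v = x ∨ v = z ∨ v = u ∨ v = w := by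
        intro v
        by_contra hv
        push_neg at hv
        obtain ⟨n1, n2, n3, n4, n5, n6⟩ := hv
        by_cases p1 : E v y <;> by_cases p2 : E y v <;> by_cases p3 : E v t <;>
          by_cases p4 : E t v
        · exact F2 x v hx_y hx_t (Ne.symm n3) (fun _ => p1) (fun _ => p2) (fun _ => p3)
            (fun h => absurd h ntx)
        · exact F2 v x n1 n2 n3 (fun _ => exy) (fun _ => eyx) (fun _ => hxt)
            (fun h => absurd h p4)
        · exact F2 v z n1 n2 n4 (fun _ => ezy) (fun _ => eyz) (fun h => absurd h p3)
            (fun _ => htz)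
        · rcases compT v n1 n2 with h | h
          · exact absurd h p3
          · exact absurd h p4
        · exact F2 v u n1 n2 n5 (fun _ => huy) (fun h => absurd h p2) (fun _ => eut)
            (fun _ => etu)
        · exact F2 v x n1 n2 n3 (fun _ => exy) (fun h => absurd h p2) (fun _ => hxt)
            (fun h => absurd h p4)
        · exact F2 v u n1 n2 n5 (fun _ => huy) (fun h => absurd h p2)
            (fun h => absurd h p3) (fun _ => etu)
        · rcases compT v n1 n2 with h | h
          · exact absurd h p3
          · exact absurd h p4
        · exact F2 v w n1 n2 n6 (fun h => absurd h p1) (fun _ => hyw) (fun _ => ewt)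
            (fun _ => etw)
        · exact F2 v w n1 n2 n6 (fun h => absurd h p1) (fun _ => hyw) (fun _ => ewt)
            (fun h => absurd h p4)
        · exact F2 v z n1 n2 n4 (fun h => absurd h p1) (fun _ => eyz)
            (fun h => absurd h p3) (fun _ => htz)
        · rcases compT v n1 n2 with h | h
          · exact absurd h p3
          · exact absurd h p4
        · rcases compY v n1 n2 with h | h
          · exact absurd h p1
          · exact absurd h p2
        · rcases compY v n1 n2 with h | h
          · exact absurd h p1
          · exact absurd h p2
        · rcases compY v n1 n2 with h | h
          · exact absurd h p1
          · exact absurd h p2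
        · rcases compY v n1 n2 with h | h
          · exact absurd h p1
          · exact absurd h p2
      -- g u = x
      have hgu : g u = x := by
        have f1 : E (g u) y := by
          have h' := hg u t eut; rwa [gst] at h'
        have f2 : E y (g u) := by
          have h' := hg t u etu; rwa [gst] at h'
        have f3 : E (g u) t := by
          have h' := hg u y huy; rwa [gsy] at h'
        rcases six (g u) with h | h | h | h | h | h
        · rw [h] at f3; exact absurd f3 h1
        · rw [h] at f1; exact absurd f1 h2
        · exact h
        · rw [h] at f3; exact absurd f3 nzt
        · rw [h] at f2; exact absurd f2 nyu
        · rw [h] at f1; exact absurd f1 nwy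
      -- x and u are incomparable
      have nxu : ¬ E x u := by
        intro h
        have h' : E u x := by
          have h'' := hg x u h
          rwa [hu_def, hgu] at h''
        exact F0 x u θxy θut h h'
      -- the killing endomorphism  e : y ↦ y, t ↦ u
      have e_hom : ∀ a ∈ ({y, t} : Set V), ∀ b ∈ ({y, t} : Set V), E a b →
          E (if a = t then u else a) (if b = t then u else b) := by
        intro a ha b hb hab
        simp only [Set.mem_insert_iff, Set.mem_singleton_iff] at ha hb
        rcases ha with rfl | rfl <;> rcases hb with rfl | rfl
        · simp only [if_neg hyt_ne]; exact hrefl _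
        · exact absurd hab h1
        · exact absurd hab h2
        · simp only [if_pos rfl]; exact hrefl _
      obtain ⟨e, he, heU⟩ := hhh ({y, t} : Set V)
        (fun a => if a = t then u else a) hfin2 e_hom
      have hey : e y = y := by
        have h' := heU y (by simp)
        simp only [if_neg hyt_ne] at h'
        exact h'
      have het : e t = u := by
        have h' := heU t (by simp)
        simp only [if_pos rfl] at h'
        exact h'
      by_cases s' : E z u
      · -- E z u holds
        have nr' : ¬ E u z := fun h => F0 z u θzy θut s' h
        have heu : e u = u := by
          have b1 : E (e u) u := by
            have h' := he u t eut; rwa [het] at h'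
          have b2 : E u (e u) := by
            have h' := he t u etu; rwa [het] at h'
          have b3 : E (e u) y := by
            have h' := he u y huy; rwa [hey] at h'
          rcases six (e u) with h | h | h | h | h | h
          · rw [h] at b1; exact absurd b1 nyu
          · rw [h] at b3; exact absurd b3 h2
          · rw [h] at b1; exact absurd b1 nxu
          · rw [h] at b2; exact absurd b2 nr'
          · exact h
          · rw [h] at b3; exact absurd b3 nwy
        have c1 : E (e z) y := by
          have h' := he z y ezy; rwa [hey] at h'
        have c2 : E y (e z) := by
          have h' := he y z eyz; rwa [hey] at h'
        have c3 : E (e z) u := by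
          have h' := he z u s'; rwa [heu] at h'
        have c4 : E u (e z) := by
          have h' := he t z htz; rwa [het] at h'
        rcases six (e z) with h | h | h | h | h | h
        · rw [h] at c3; exact absurd c3 nyu
        · rw [h] at c1; exact absurd c1 h2
        · rw [h] at c3; exact absurd c3 nxu
        · rw [h] at c4; exact absurd c4 nr'
        · rw [h] at c2; exact absurd c2 nyu
        · rw [h] at c1; exact absurd c1 nwy
      · -- E z u fails
        have a1 : E (e x) y := by
          have h' := he x y exy; rwa [hey] at h'
        have a2 : E y (e x) := by
          have h' := he y x eyx; rwa [hey] at h'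
        have a3 : E (e x) u := by
          have h' := he x t hxt; rwa [het] at h'
        rcases six (e x) with h | h | h | h | h | h
        · rw [h] at a3; exact absurd a3 nyu
        · rw [h] at a1; exact absurd a1 h2
        · rw [h] at a3; exact absurd a3 nxu
        · rw [h] at a3; exact absurd a3 s'
        · rw [h] at a2; exact absurd a2 nyu
        · rw [h] at a1; exact absurd a1 nwy


/-- Let `D` be a finite homomorphism-homogeneous reflexive improper
bidirectionally disconnected digraph, and let `S = [x₀]`, `T = [y₀]` be distinct
`θ(D)`-classes with edges in both directions. Then the relation `γ_T(S)`, defined by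
`(x, y) ∈ γ_T(S)` iff there is no `t ∈ T` with `x → t → y` or `y → t → x`, is an
equivalence relation on `S`. -/
theorem stmt_16 {V : Type*} [Fintype V] (E : V → V → Prop)
    (hrefl : ∀ x, E x x) (himp : Improper E) (hbd : BidirDisconnected E)
    (hhh : IsHomHom E)
    (x₀ y₀ : V) (hxy : ¬ Theta E x₀ y₀)
    (hST : ∃ s t, Theta E s x₀ ∧ Theta E t y₀ ∧ E s t)
    (hTS : ∃ s t, Theta E s x₀ ∧ Theta E t y₀ ∧ E t s) :
    (∀ x, Theta E x x₀ →
      ¬ ∃ t, Theta E t y₀ ∧ ((E x t ∧ E t x) ∨ (E x t ∧ E t x))) ∧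
    (∀ x y, Theta E x x₀ → Theta E y x₀ →
      (¬ ∃ t, Theta E t y₀ ∧ ((E x t ∧ E t y) ∨ (E y t ∧ E t x))) →
      (¬ ∃ t, Theta E t y₀ ∧ ((E y t ∧ E t x) ∨ (E x t ∧ E t y)))) ∧
    (∀ x y z, Theta E x x₀ → Theta E y x₀ → Theta E z x₀ →
      (¬ ∃ t, Theta E t y₀ ∧ ((E x t ∧ E t y) ∨ (E y t ∧ E t x))) →
      (¬ ∃ t, Theta E t y₀ ∧ ((E y t ∧ E t z) ∨ (E z t ∧ E t y))) →
      (¬ ∃ t, Theta E t y₀ ∧ ((E x t ∧ E t z) ∨ (E z t ∧ E t x)))) := by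
  refine ⟨?_, ?_, ?_⟩
  · rintro x hx ⟨t, ht, h | h⟩ <;>
      exact hxy (theta_trans (theta_symm hx)
        (theta_trans (Relation.EqvGen.rel _ _ ⟨h.1, h.2⟩) ht))
  · rintro x y hx hy hno ⟨t, ht, h | h⟩
    · exact hno ⟨t, ht, Or.inr h⟩
    · exact hno ⟨t, ht, Or.inl h⟩
  · rintro x y z hx hy hz hnxy hnyz ⟨t, ht, ⟨hxt, htz⟩ | ⟨hzt, htx⟩⟩
    · have hyt : ¬ E y t := fun h => hnyz ⟨t, ht, Or.inl ⟨h, htz⟩⟩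
      have hty : ¬ E t y := fun h => hnxy ⟨t, ht, Or.inl ⟨hxt, h⟩⟩
      have hθ : ¬ Theta E y t := fun h =>
        hxy (theta_trans (theta_symm hy) (theta_trans h ht))
      have θxy' : Theta E x y := theta_trans hx (theta_symm hy)
      have θzy' : Theta E z y := theta_trans hz (theta_symm hy)
      rcases key_lemma (Fintype.card V) V E le_rfl hrefl hhh y t x z hθ θxy' θzy'
        hxt htz with h | h
      · exact hyt h
      · exact hty h
    · have hyt : ¬ E y t := fun h => hnxy ⟨t, ht, Or.inr ⟨h, htx⟩⟩
      have hty : ¬ E t y := fun h => hnyz ⟨t, ht, Or.inr ⟨hzt, h⟩⟩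
      have hθ : ¬ Theta E y t := fun h =>
        hxy (theta_trans (theta_symm hy) (theta_trans h ht))
      have θxy' : Theta E x y := theta_trans hx (theta_symm hy)
      have θzy' : Theta E z y := theta_trans hz (theta_symm hy)
      rcases key_lemma (Fintype.card V) V E le_rfl hrefl hhh y t z x hθ θzy' θxy'
        hzt htx with h | h
      · exact hyt h
      · exact hty h
end

section
/- A finite reflexive proper digraph D is homomorphism-homogeneous if and only if every inflation of D is homomorphism-homogeneous. (In particular, since D is an inflation of itself with all singleton classes, the backward direction is immediate; the forward direction states that inflations preserve homomorphism-homogeneity.) -/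
/-- The inflation of a digraph `(V, E)` along a family of classes `W v`: the vertex set is
`Σ v, W v`, with all edges inside each class, and all edges from class `v` to class `u`
whenever `v ≠ u` and `E v u`. -/
def InflEdge {V : Type*} (E : V → V → Prop) (W : V → Type*) :
    (Σ v, W v) → (Σ v, W v) → Prop :=
  fun a b => a.1 = b.1 ∨ E a.1 b.1

/-- A finite reflexive proper digraph is homomorphism-homogeneous iff
every inflation of it (by finite nonempty classes) is homomorphism-homogeneous. -/
theorem stmt_18 {V : Type} [Fintype V] (E : V → V → Prop)
    (hrefl : ∀ x, E x x)
    (hproper : ∀ x y, x ≠ y → E x y → ¬ E y x) :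
    IsHomHom E ↔
      ∀ (W : V → Type) (_ : ∀ v, Fintype (W v)) (_ : ∀ v, Nonempty (W v)),
        IsHomHom (InflEdge E W) := by
  classical
  have hIE : ∀ (W : V → Type) (a b : Σ v, W v), InflEdge E W a b ↔ E a.1 b.1 := by
    intro W a b
    constructor
    · rintro (h | h)
      · rw [h]; exact hrefl _
      · exact h
    · exact Or.inr
  constructor
  · intro hE W _ hne U f hU hf
    -- first components of f are constant on classes
    have key : ∀ a ∈ U, ∀ b ∈ U, a.1 = b.1 → (f a).1 = (f b).1 := by
      intro a ha b hb hab
      by_contra hne'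
      have h1 : E (f a).1 (f b).1 := (hIE W _ _).1 (hf a ha b hb (Or.inl hab))
      have h2 : E (f b).1 (f a).1 := (hIE W _ _).1 (hf b hb a ha (Or.inl hab.symm))
      exact hproper _ _ hne' h1 h2
    set φ : V → V := fun v =>
      if h : ∃ a : Σ v, W v, a ∈ U ∧ a.1 = v then (f h.choose).1 else v with hφ
    have hφ' : ∀ a ∈ U, φ a.1 = (f a).1 := by
      intro a ha
      have hex : ∃ b : Σ v, W v, b ∈ U ∧ b.1 = a.1 := ⟨a, ha, rfl⟩
      simp only [hφ, dif_pos hex]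
      exact key _ hex.choose_spec.1 _ ha hex.choose_spec.2
    have hφhom : ∀ x ∈ Sigma.fst '' U, ∀ y ∈ Sigma.fst '' U, E x y → E (φ x) (φ y) := by
      rintro x ⟨a, ha, rfl⟩ y ⟨b, hb, rfl⟩ hxy
      rw [hφ' a ha, hφ' b hb]
      exact (hIE W _ _).1 (hf a ha b hb (Or.inr hxy))
    obtain ⟨g, hg, hgφ⟩ := hE (Sigma.fst '' U) φ (Set.toFinite _) hφhom
    have hGf : ∀ a ∈ U, g a.1 = (f a).1 := by
        intro a ha
        rw [hgφ a.1 ⟨a, ha, rfl⟩, hφ' a ha]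
    refine ⟨fun a => if ha : a ∈ U then f a else ⟨g a.1, (hne _).some⟩, ?_, ?_⟩
    · intro a b hab
      have h1 : E (g a.1) (g b.1) := hg _ _ ((hIE W _ _).1 hab)
      refine (hIE W _ _).2 ?_
      by_cases ha : a ∈ U <;> by_cases hb : b ∈ U <;>
        simp only [dif_pos, dif_neg, ha, hb]
      · rw [← hGf a ha, ← hGf b hb]; exact h1
      · rw [← hGf a ha]; exact h1
      · rw [← hGf b hb]; exact h1
      · exact h1
    · intro a ha
      simp [ha]
  · intro h U f hU hf
    have h1 := h (fun _ => PUnit) (fun _ => inferInstance) (fun _ => ⟨⟨⟩⟩)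
    have hf2 : ∀ a ∈ Sigma.fst ⁻¹' U, ∀ b ∈ Sigma.fst ⁻¹' U,
        InflEdge E (fun _ => PUnit) a b →
        InflEdge E (fun _ => PUnit) (⟨f a.1, ⟨⟩⟩ : Σ _ : V, PUnit) ⟨f b.1, ⟨⟩⟩ := by
      intro a ha b hb hab
      exact Or.inr (hf a.1 ha b.1 hb ((hIE _ _ _).1 hab))
    obtain ⟨g, hg, hgf⟩ := h1 (Sigma.fst ⁻¹' U) (fun a => ⟨f a.1, ⟨⟩⟩) (Set.toFinite _) hf2
    refine ⟨fun v => (g ⟨v, ⟨⟩⟩).1, ?_, ?_⟩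
    · intro x y hxy
      exact (hIE _ _ _).1 (hg ⟨x, ⟨⟩⟩ ⟨y, ⟨⟩⟩ (Or.inr hxy))
    · intro x hx
      have := hgf ⟨x, ⟨⟩⟩ hx
      simpa using congrArg Sigma.fst this
end
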